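/- arXiv:1806.10959 — 2 statements merged into one kernel-verified Lean document; each statement's English description precedes it below -/
import Mathlib

section
/- Fix integers r ≥ 2, 1 ≤ k ≤ r, and a real α > −1, and suppose the equation r · C(r−1,k−1) · y^{k−1}(1−y)^{r−k} = 2+α has exactly two solutions z₁ < z₂ in (0,1). Then for every x ∈ [0,1], the function y ↦ F₁(y; x, k, r) is strictly decreasing on [0, z₁] and on [z₂, 1] and strictly increasing on [z₁, z₂]; consequently F₁(·; x, k, r) has at most three zeros in [0,1]. -/
open Finset

/-- `g(y; k, r) = ∑_{i=k}^{r} C(r,i) y^i (1−y)^{r−i}`. -/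
noncomputable def g (r k : ℕ) (y : ℝ) : ℝ :=
  ∑ i ∈ Finset.Icc k r, (r.choose i : ℝ) * y ^ i * (1 - y) ^ (r - i)

/-- `F₁(y; x, k, r) = g(y; k, r) − (2+α)y + x(1+α)`. -/
noncomputable def F1 (r k : ℕ) (α x y : ℝ) : ℝ :=
  g r k y - (2 + α) * y + x * (1 + α)

/-- `dg(y; k, r) = r · C(r−1, k−1) · y^{k−1} (1−y)^{r−k}`. -/
noncomputable def dg (r k : ℕ) (y : ℝ) : ℝ :=
  (r : ℝ) * ((r - 1).choose (k - 1) : ℝ) * y ^ (k - 1) * (1 - y) ^ (r - k)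


lemma hasDerivAt_g (r k : ℕ) (hk1 : 1 ≤ k) (hkr : k ≤ r) (y : ℝ) :
    HasDerivAt (g r k) (dg r k y) y := by
  set G : Polynomial ℝ := ∑ i ∈ Finset.Icc k r, bernsteinPolynomial ℝ r i with hG
  have hg : g r k = fun y => G.eval y := by
    funext z
    simp [g, hG, Polynomial.eval_finset_sum, bernsteinPolynomial]
  have hder : Polynomial.derivative G = (r : Polynomial ℝ) * bernsteinPolynomial ℝ (r - 1) (k - 1) := by
    rw [hG, map_sum]
    have hicc : Finset.Icc k r = Finset.Ico k (r + 1) := by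
      rw [Finset.Ico_add_one_right_eq_Icc]
    rw [hicc, Finset.sum_Ico_eq_sum_range]
    have hstep : ∀ j, Polynomial.derivative (bernsteinPolynomial ℝ r (k + j)) =
        (r : Polynomial ℝ) * (bernsteinPolynomial ℝ (r - 1) (k - 1 + j)
          - bernsteinPolynomial ℝ (r - 1) (k - 1 + (j + 1))) := by
      intro j
      have hk : k + j = (k - 1 + j) + 1 := by omega
      rw [hk, bernsteinPolynomial.derivative_succ, ← add_assoc]
    have : ∀ j ∈ Finset.range (r + 1 - k),
        Polynomial.derivative (bernsteinPolynomial ℝ r (k + j)) =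
        (r : Polynomial ℝ) * ((fun j => bernsteinPolynomial ℝ (r - 1) (k - 1 + j)) j
          - (fun j => bernsteinPolynomial ℝ (r - 1) (k - 1 + j)) (j + 1)) :=
      fun j _ => hstep j
    rw [Finset.sum_congr rfl this, ← Finset.mul_sum, Finset.sum_range_sub']
    have h1 : k - 1 + (r + 1 - k) = r := by omega
    have h2 : bernsteinPolynomial ℝ (r - 1) r = 0 :=
      bernsteinPolynomial.eq_zero_of_lt ℝ (by omega)
    simp only [h1, h2, add_zero, sub_zero]
  have := G.hasDerivAt y
  rw [hg]
  convert this using 1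
  · rfl
  rw [hder]
  simp [dg, bernsteinPolynomial]
  have : r - 1 - (k - 1) = r - k := by omega
  rw [this]
  ring

lemma hasDerivAt_dg (r k : ℕ) (y : ℝ) :
    HasDerivAt (dg r k)
      ((r : ℝ) * ((r - 1).choose (k - 1) : ℝ) *
        (((k - 1 : ℕ) : ℝ) * y ^ (k - 1 - 1) * (1 - y) ^ (r - k)
          - ((r - k : ℕ) : ℝ) * y ^ (k - 1) * (1 - y) ^ (r - k - 1))) y := by
  have h1 : HasDerivAt (fun z : ℝ => z ^ (k - 1)) (((k - 1 : ℕ) : ℝ) * y ^ (k - 1 - 1)) y :=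
    hasDerivAt_pow (k - 1) y
  have h2 : HasDerivAt (fun z : ℝ => (1 - z) ^ (r - k))
      (-(((r - k : ℕ) : ℝ) * (1 - y) ^ (r - k - 1))) y := by
    have := (hasDerivAt_pow (r - k) (1 - y)).comp y ((hasDerivAt_const y (1:ℝ)).sub (hasDerivAt_id y))
    simpa [Function.comp_def] using this
  have := (h1.mul h2).const_mul ((r : ℝ) * ((r - 1).choose (k - 1) : ℝ))
  convert this using 1
  · rfl
  · rfl
  · funext z; simp [dg]; ring
  · ring

lemma dg_mono (r k : ℕ) (hr : 2 ≤ r) (hk1 : 1 ≤ k) (hkr : k ≤ r) :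
    StrictMonoOn (dg r k) (Set.Icc 0 (((k : ℝ) - 1) / ((r : ℝ) - 1))) := by
  set m : ℝ := ((k : ℝ) - 1) / ((r : ℝ) - 1) with hm
  have hr1 : (0 : ℝ) < (r : ℝ) - 1 := by
    have : (2 : ℝ) ≤ (r : ℝ) := by exact_mod_cast hr
    linarith
  apply strictMonoOn_of_deriv_pos (convex_Icc _ _)
  · exact fun y _ => ((hasDerivAt_dg r k y).continuousAt).continuousWithinAt
  · intro y hy
    rw [interior_Icc] at hy
    obtain ⟨hy0, hym⟩ := hy
    have hk2 : 2 ≤ k := by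
      by_contra h
      have hk : k = 1 := by omega
      have hmz : m = 0 := by rw [hm, hk]; norm_num
      linarith
    obtain ⟨a', ha'⟩ : ∃ a', k - 1 = a' + 1 := ⟨k - 2, by omega⟩
    have hy1 : y < 1 := by
      have hm1 : m ≤ 1 := by
        rw [hm, div_le_one hr1]
        have : (k : ℝ) ≤ (r : ℝ) := by exact_mod_cast hkr
        linarith
      linarith
    rw [(hasDerivAt_dg r k y).deriv]
    have hC : (0 : ℝ) < (r : ℝ) * ((r - 1).choose (k - 1) : ℝ) := by
      apply mul_pos
      · exact_mod_cast (by omega : 0 < r)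
      · exact_mod_cast Nat.choose_pos (by omega)
    apply mul_pos hC
    rcases Nat.eq_zero_or_pos (r - k) with hb | hb
    · have hA : (0:ℝ) < ((k - 1 : ℕ) : ℝ) * y ^ (k - 1 - 1) * (1 - y) ^ (r - k) := by
        rw [hb, pow_zero, ha']
        have h1 : (0:ℝ) < ((a' + 1 : ℕ) : ℝ) := by positivity
        have := mul_pos h1 (pow_pos hy0 (a' + 1 - 1))
        linarith
      have hB : ((r - k : ℕ) : ℝ) * y ^ (k - 1) * (1 - y) ^ (r - k - 1) = 0 := by
        rw [hb]; norm_num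
      linarith
    · obtain ⟨b', hb'⟩ : ∃ b', r - k = b' + 1 := ⟨r - k - 1, by omega⟩
      rw [ha', hb']
      have hknat : k = a' + 2 := by omega
      have hrnat : r = a' + b' + 3 := by omega
      have hka : (k : ℝ) - 1 = (a' : ℝ) + 1 := by rw [hknat]; push_cast; ring
      have hcast : (r : ℝ) - 1 = ((a' : ℝ) + 1) + ((b' : ℝ) + 1) := by
        rw [hrnat]; push_cast; ring
      have key : ((a' + 1 : ℕ) : ℝ) * y ^ (a' + 1 - 1) * (1 - y) ^ (b' + 1)
          - ((b' + 1 : ℕ) : ℝ) * y ^ (a' + 1) * (1 - y) ^ (b' + 1 - 1)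
          = y ^ a' * (1 - y) ^ b' * (((a' : ℝ) + 1) - ((r : ℝ) - 1) * y) := by
        rw [hcast]
        push_cast
        ring
      rw [key]
      apply mul_pos (mul_pos (pow_pos hy0 _) (pow_pos (by linarith) _))
      have hkm : y * ((r : ℝ) - 1) < (k : ℝ) - 1 := by
        rw [hm, lt_div_iff₀ hr1] at hym
        linarith
      linarith

lemma dg_anti (r k : ℕ) (hr : 2 ≤ r) (hk1 : 1 ≤ k) (hkr : k ≤ r) :
    StrictAntiOn (dg r k) (Set.Icc (((k : ℝ) - 1) / ((r : ℝ) - 1)) 1) := by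
  set m : ℝ := ((k : ℝ) - 1) / ((r : ℝ) - 1) with hm
  have hr1 : (0 : ℝ) < (r : ℝ) - 1 := by
    have : (2 : ℝ) ≤ (r : ℝ) := by exact_mod_cast hr
    linarith
  apply strictAntiOn_of_deriv_neg (convex_Icc _ _)
  · exact fun y _ => ((hasDerivAt_dg r k y).continuousAt).continuousWithinAt
  · intro y hy
    rw [interior_Icc] at hy
    obtain ⟨hym, hy1⟩ := hy
    have hm0 : 0 ≤ m := by
      rw [hm]
      apply div_nonneg _ (le_of_lt hr1)
      have : (1:ℝ) ≤ (k:ℝ) := by exact_mod_cast hk1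
      linarith
    have hy0 : 0 < y := lt_of_le_of_lt hm0 hym
    have hkr' : k < r := by
      by_contra h
      have hk : k = r := by omega
      have hmz : m = 1 := by rw [hm, hk, div_self (ne_of_gt hr1)]
      linarith
    obtain ⟨b', hb'⟩ : ∃ b', r - k = b' + 1 := ⟨r - k - 1, by omega⟩
    rw [(hasDerivAt_dg r k y).deriv]
    have hC : (0 : ℝ) < (r : ℝ) * ((r - 1).choose (k - 1) : ℝ) := by
      apply mul_pos
      · exact_mod_cast (by omega : 0 < r)
      · exact_mod_cast Nat.choose_pos (by omega)
    apply mul_neg_of_pos_of_neg hC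
    rcases Nat.eq_zero_or_pos (k - 1) with ha | ha
    · have hA : ((k - 1 : ℕ) : ℝ) * y ^ (k - 1 - 1) * (1 - y) ^ (r - k) = 0 := by
        rw [ha]; norm_num
      have hB : (0:ℝ) < ((r - k : ℕ) : ℝ) * y ^ (k - 1) * (1 - y) ^ (r - k - 1) := by
        rw [hb', ha, pow_zero, mul_one]
        have h1 : (0:ℝ) < ((b' + 1 : ℕ) : ℝ) := by positivity
        exact mul_pos h1 (pow_pos (by linarith) (b' + 1 - 1))
      linarith
    · obtain ⟨a', ha'⟩ : ∃ a', k - 1 = a' + 1 := ⟨k - 2, by omega⟩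
      rw [ha', hb']
      have hknat : k = a' + 2 := by omega
      have hrnat : r = a' + b' + 3 := by omega
      have hka : (k : ℝ) - 1 = (a' : ℝ) + 1 := by rw [hknat]; push_cast; ring
      have hcast : (r : ℝ) - 1 = ((a' : ℝ) + 1) + ((b' : ℝ) + 1) := by
        rw [hrnat]; push_cast; ring
      have key : ((a' + 1 : ℕ) : ℝ) * y ^ (a' + 1 - 1) * (1 - y) ^ (b' + 1)
          - ((b' + 1 : ℕ) : ℝ) * y ^ (a' + 1) * (1 - y) ^ (b' + 1 - 1)
          = y ^ a' * (1 - y) ^ b' * (((a' : ℝ) + 1) - ((r : ℝ) - 1) * y) := by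
        rw [hcast]
        push_cast
        ring
      rw [key]
      apply mul_neg_of_pos_of_neg (mul_pos (pow_pos hy0 _) (pow_pos (by linarith) _))
      have hkm : (k : ℝ) - 1 < y * ((r : ℝ) - 1) := by
        rw [hm, div_lt_iff₀ hr1] at hym
        linarith
      linarith

theorem stmt_4 (r k : ℕ) (hr : 2 ≤ r) (hk1 : 1 ≤ k) (hkr : k ≤ r)
    (α : ℝ) (hα : -1 < α) (z₁ z₂ : ℝ) (hz : z₁ < z₂)
    (hsol : {y : ℝ | y ∈ Set.Ioo (0 : ℝ) 1 ∧ dg r k y = 2 + α} = {z₁, z₂})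
    (x : ℝ) (hx : x ∈ Set.Icc (0 : ℝ) 1) :
    StrictAntiOn (F1 r k α x) (Set.Icc 0 z₁) ∧
    StrictAntiOn (F1 r k α x) (Set.Icc z₂ 1) ∧
    StrictMonoOn (F1 r k α x) (Set.Icc z₁ z₂) ∧
    {y : ℝ | y ∈ Set.Icc (0 : ℝ) 1 ∧ F1 r k α x y = 0}.encard ≤ 3 := by
  set m : ℝ := ((k : ℝ) - 1) / ((r : ℝ) - 1) with hm
  -- z₁, z₂ are solutions
  have hz₁ : z₁ ∈ Set.Ioo (0:ℝ) 1 ∧ dg r k z₁ = 2 + α := by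
    have : z₁ ∈ ({z₁, z₂} : Set ℝ) := by left; rfl
    rw [← hsol] at this; exact this
  have hz₂ : z₂ ∈ Set.Ioo (0:ℝ) 1 ∧ dg r k z₂ = 2 + α := by
    have : z₂ ∈ ({z₁, z₂} : Set ℝ) := by right; rfl
    rw [← hsol] at this; exact this
  obtain ⟨⟨hz₁0, hz₁1⟩, hdg₁⟩ := hz₁
  obtain ⟨⟨hz₂0, hz₂1⟩, hdg₂⟩ := hz₂
  have hmono := dg_mono r k hr hk1 hkr
  have hanti := dg_anti r k hr hk1 hkr
  have hr1 : (0 : ℝ) < (r : ℝ) - 1 := by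
    have : (2 : ℝ) ≤ (r : ℝ) := by exact_mod_cast hr
    linarith
  have hm0 : 0 ≤ m := by
    rw [hm]
    apply div_nonneg _ hr1.le
    have : (1:ℝ) ≤ (k:ℝ) := by exact_mod_cast hk1
    linarith
  have hm1 : m ≤ 1 := by
    rw [hm, div_le_one hr1]
    have : (k : ℝ) ≤ (r : ℝ) := by exact_mod_cast hkr
    linarith
  -- z₁ < m < z₂
  have hz₁m : z₁ < m := by
    by_contra h
    push_neg at h
    have := hanti ⟨h, hz₁1.le⟩ ⟨h.trans hz.le, hz₂1.le⟩ hz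
    rw [hdg₁, hdg₂] at this
    exact lt_irrefl _ this
  have hmz₂ : m < z₂ := by
    by_contra h
    push_neg at h
    have := hmono ⟨hz₁0.le, hz.le.trans h⟩ ⟨hz₂0.le, h⟩ hz
    rw [hdg₁, hdg₂] at this
    exact lt_irrefl _ this
  -- derivative of F1
  have hF1 : ∀ y : ℝ, HasDerivAt (F1 r k α x) (dg r k y - (2 + α)) y := by
    intro y
    have h1 := hasDerivAt_g r k hk1 hkr y
    have h2 : HasDerivAt (fun y : ℝ => (2 + α) * y) (2 + α) y := by
      simpa using (hasDerivAt_id y).const_mul (2 + α)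
    have := (h1.sub h2).add_const (x * (1 + α))
    exact this
  have hcont : ∀ s : Set ℝ, ContinuousOn (F1 r k α x) s :=
    fun s => fun y _ => (hF1 y).continuousAt.continuousWithinAt
  -- three monotonicity statements
  have hA1 : StrictAntiOn (F1 r k α x) (Set.Icc 0 z₁) := by
    apply strictAntiOn_of_deriv_neg (convex_Icc _ _) (hcont _)
    intro y hy
    rw [interior_Icc] at hy
    rw [(hF1 y).deriv]
    have : dg r k y < dg r k z₁ :=
      hmono ⟨hy.1.le, (hy.2.trans hz₁m).le⟩ ⟨hz₁0.le, hz₁m.le⟩ hy.2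
    rw [hdg₁] at this
    linarith
  have hA2 : StrictAntiOn (F1 r k α x) (Set.Icc z₂ 1) := by
    apply strictAntiOn_of_deriv_neg (convex_Icc _ _) (hcont _)
    intro y hy
    rw [interior_Icc] at hy
    rw [(hF1 y).deriv]
    have : dg r k y < dg r k z₂ :=
      hanti ⟨hmz₂.le, hz₂1.le⟩ ⟨(hmz₂.trans hy.1).le, hy.2.le⟩ hy.1
    rw [hdg₂] at this
    linarith
  have hM : StrictMonoOn (F1 r k α x) (Set.Icc z₁ z₂) := by
    apply strictMonoOn_of_deriv_pos (convex_Icc _ _) (hcont _)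
    intro y hy
    rw [interior_Icc] at hy
    rw [(hF1 y).deriv]
    have hkey : 2 + α < dg r k y := by
      rcases le_total y m with hym | hym
      · have : dg r k z₁ < dg r k y :=
          hmono ⟨hz₁0.le, hz₁m.le⟩ ⟨(hz₁0.trans hy.1).le, hym⟩ hy.1
        rwa [hdg₁] at this
      · have : dg r k z₂ < dg r k y :=
          hanti ⟨hym, (hy.2.trans hz₂1).le⟩ ⟨hmz₂.le, hz₂1.le⟩ hy.2
        rwa [hdg₂] at this
    linarith
  refine ⟨hA1, hA2, hM, ?_⟩
  -- counting zeros
  set S : Set ℝ := {y : ℝ | y ∈ Set.Icc (0 : ℝ) 1 ∧ F1 r k α x y = 0} with hS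
  have hcover : S ⊆ (S ∩ Set.Icc 0 z₁) ∪ (S ∩ Set.Icc z₁ z₂) ∪ (S ∩ Set.Icc z₂ 1) := by
    intro y hy
    obtain ⟨⟨hy0, hy1⟩, -⟩ := id hy
    rcases le_total y z₁ with h | h
    · exact Or.inl (Or.inl ⟨hy, hy0, h⟩)
    · rcases le_total y z₂ with h' | h'
      · exact Or.inl (Or.inr ⟨hy, h, h'⟩)
      · exact Or.inr ⟨hy, h', hy1⟩
  have hcard : ∀ (T : Set ℝ), (∀ a ∈ T, ∀ b ∈ T, a = b) → T.encard ≤ 1 := by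
    intro T h
    exact Set.encard_le_one_iff.mpr (fun a b ha hb => h a ha b hb)
  have h1 : (S ∩ Set.Icc 0 z₁).encard ≤ 1 := by
    apply hcard
    intro a ha b hb
    exact hA1.injOn ha.2 hb.2 (by rw [ha.1.2, hb.1.2])
  have h2 : (S ∩ Set.Icc z₁ z₂).encard ≤ 1 := by
    apply hcard
    intro a ha b hb
    exact hM.injOn ha.2 hb.2 (by rw [ha.1.2, hb.1.2])
  have h3 : (S ∩ Set.Icc z₂ 1).encard ≤ 1 := by
    apply hcard
    intro a ha b hb
    exact hA2.injOn ha.2 hb.2 (by rw [ha.1.2, hb.1.2])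
  calc S.encard ≤ ((S ∩ Set.Icc 0 z₁) ∪ (S ∩ Set.Icc z₁ z₂) ∪ (S ∩ Set.Icc z₂ 1)).encard :=
        Set.encard_mono hcover
    _ ≤ ((S ∩ Set.Icc 0 z₁) ∪ (S ∩ Set.Icc z₁ z₂)).encard + (S ∩ Set.Icc z₂ 1).encard :=
        Set.encard_union_le _ _
    _ ≤ (S ∩ Set.Icc 0 z₁).encard + (S ∩ Set.Icc z₁ z₂).encard + (S ∩ Set.Icc z₂ 1).encard := by
        gcongr
        exact Set.encard_union_le _ _
    _ ≤ 1 + 1 + 1 := by gcongr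
    _ = 3 := by norm_num
end

section
/- For all y ∈ [0,1], one has 21(y(1−y)⁵ + y⁵(1−y)) ≤ (35√10 − 98)/9, with equality if and only if y = 1/2 − (1/6)√(6√10 − 15) or y = 1/2 + (1/6)√(6√10 − 15). Consequently, for α > −1, the maximum over y ∈ [0,1] of q′(y) = 21(y(1−y)⁵ + y⁵(1−y)) − (2+α) is strictly positive if and only if α < (35√10 − 116)/9. -/
theorem stmt_18 :
    (∀ y ∈ Set.Icc (0 : ℝ) 1,
      21 * (y * (1 - y) ^ 5 + y ^ 5 * (1 - y)) ≤ (35 * Real.sqrt 10 - 98) / 9 ∧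
      (21 * (y * (1 - y) ^ 5 + y ^ 5 * (1 - y)) = (35 * Real.sqrt 10 - 98) / 9 ↔
        y = 1 / 2 - (1 / 6) * Real.sqrt (6 * Real.sqrt 10 - 15) ∨
        y = 1 / 2 + (1 / 6) * Real.sqrt (6 * Real.sqrt 10 - 15))) ∧
    (∀ α : ℝ, -1 < α →
      ((∃ y ∈ Set.Icc (0 : ℝ) 1,
          0 < 21 * (y * (1 - y) ^ 5 + y ^ 5 * (1 - y)) - (2 + α)) ↔
        α < (35 * Real.sqrt 10 - 116) / 9)) := by
  set t := Real.sqrt 10 with htdef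
  have ht : t ^ 2 = 10 := Real.sq_sqrt (by norm_num)
  have ht0 : 0 ≤ t := Real.sqrt_nonneg 10
  have h3 : 3 < t := by nlinarith
  have h32 : t < 3.2 := by nlinarith
  have hupos : (0:ℝ) ≤ 6 * t - 15 := by linarith
  set u := Real.sqrt (6 * t - 15) with hudef
  have hu : u ^ 2 = 6 * t - 15 := Real.sq_sqrt hupos
  have hu0 : 0 ≤ u := Real.sqrt_nonneg _
  have hu3 : u < 3 := by nlinarith
  -- key identity
  have key : ∀ y : ℝ,
      (35 * t - 98) / 9 - 21 * (y * (1 - y) ^ 5 + y ^ 5 * (1 - y)) =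
      42 * (y * (1 - y) - (4 - t) / 6) ^ 2 * ((2 + t) / 3 - y * (1 - y)) := by
    intro y
    linear_combination (7/3 - 7/2*y + 7/2*y^2 - 7/18*t) * ht
  have main : ∀ y ∈ Set.Icc (0:ℝ) 1,
      21 * (y * (1 - y) ^ 5 + y ^ 5 * (1 - y)) ≤ (35 * t - 98) / 9 ∧
      (21 * (y * (1 - y) ^ 5 + y ^ 5 * (1 - y)) = (35 * t - 98) / 9 ↔
        y = 1 / 2 - (1 / 6) * u ∨ y = 1 / 2 + (1 / 6) * u) := by
    intro y hy
    obtain ⟨hy0, hy1⟩ := hy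
    have hpos : 0 < (2 + t) / 3 - y * (1 - y) := by nlinarith
    have hsq : 0 ≤ (y * (1 - y) - (4 - t) / 6) ^ 2 := sq_nonneg _
    constructor
    · nlinarith [key y, mul_nonneg hsq hpos.le]
    constructor
    · intro heq
      have h0 : 42 * (y * (1 - y) - (4 - t) / 6) ^ 2 * ((2 + t) / 3 - y * (1 - y)) = 0 := by
        linarith [key y]
      have hq : y * (1 - y) - (4 - t) / 6 = 0 := by
        by_contra hne
        have : 0 < (y * (1 - y) - (4 - t) / 6) ^ 2 := by positivity
        nlinarith
      have hfac : (y - (1 / 2 - (1 / 6) * u)) * (y - (1 / 2 + (1 / 6) * u)) = 0 := by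
        linear_combination -hq - (1/36) * hu
      rcases mul_eq_zero.mp hfac with h | h
      · left; linarith
      · right; linarith
    · intro h
      have hq : y * (1 - y) - (4 - t) / 6 = 0 := by
        rcases h with h | h <;> subst h <;> linear_combination (-1/36) * hu
      nlinarith [key y]
  constructor
  · exact main
  · intro α _
    constructor
    · rintro ⟨y, hy, hpos⟩
      have := (main y hy).1
      linarith
    · intro hα
      refine ⟨1 / 2 - (1 / 6) * u, ⟨by linarith, by linarith⟩, ?_⟩
      have heq := (main (1 / 2 - (1 / 6) * u) ⟨by linarith, by linarith⟩).2.mpr (Or.inl rfl)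
      linarith
end
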